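/- Let δ ≥ 0, L ≥ 0 and let (t_i, D_i), i ∈ S, be a nonempty finite family of observations with durations D_i > 0 that fits in an interval [a, a+L] and satisfies the setup-time condition with setup time δ. Then Σ_{i∈S} (D_i + δ) ≤ L + δ; equivalently, Σ_{i∈S} D_i + (|S| − 1)·δ ≤ L. -/
import Mathlib

private lemma setup_aux {ι : Type*} [DecidableEq ι] (t D : ι → ℝ) (δ : ℝ) (hδ : 0 ≤ δ) :
    ∀ n (S : Finset ι), S.card = n → S.Nonempty →
    (∀ i ∈ S, 0 < D i) → ∀ a L : ℝ,
    (∀ i ∈ S, a ≤ t i ∧ t i + D i ≤ a + L) →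
    (∀ i ∈ S, ∀ j ∈ S, i ≠ j →
      t j ≥ t i + D i + δ ∨ t i ≥ t j + D j + δ) →
    (∑ i ∈ S, (D i + δ)) ≤ L + δ := by
  intro n
  induction n with
  | zero =>
      intro S hcard hne
      exact absurd (Finset.card_eq_zero.mp hcard) hne.ne_empty
  | succ n ih =>
      intro S hcard hne hD a L hfit hsetup
      obtain ⟨m, hm, hmax⟩ := S.exists_max_image t hne
      set S' := S.erase m with hS'
      have hsum : ∑ i ∈ S, (D i + δ) = (∑ i ∈ S', (D i + δ)) + (D m + δ) := by
        rw [hS', Finset.sum_erase_add _ _ hm]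
      rcases S'.eq_empty_or_nonempty with h0 | hne'
      · rw [hsum, h0, Finset.sum_empty, zero_add]
        have := hfit m hm
        linarith [this.1, this.2]
      · have hcard' : S'.card = n := by
          rw [hS', Finset.card_erase_of_mem hm, hcard]; rfl
        have hbd : ∀ i ∈ S', t i + D i ≤ t m - δ := by
          intro i hi
          have him : i ∈ S := Finset.mem_of_mem_erase hi
          have hne'' : i ≠ m := Finset.ne_of_mem_erase hi
          rcases hsetup i him m hm hne'' with h | h
          · linarith
          · exact absurd (hmax i him) (by linarith [(hD m hm)])
        have hfit' : ∀ i ∈ S', a ≤ t i ∧ t i + D i ≤ a + (t m - δ - a) := by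
          intro i hi
          exact ⟨(hfit i (Finset.mem_of_mem_erase hi)).1,
            by linarith [hbd i hi]⟩
        have hIH := ih S' hcard' hne'
          (fun i hi => hD i (Finset.mem_of_mem_erase hi)) a (t m - δ - a) hfit'
          (fun i hi j hj hij =>
            hsetup i (Finset.mem_of_mem_erase hi) j (Finset.mem_of_mem_erase hj) hij)
        have := hfit m hm
        rw [hsum]
        linarith [this.2]

/-- Unequal-duration capacity bound: if a nonempty finite family of observations with
durations `D i > 0` fits in `[a, a+L]` and satisfies the setup-time condition with
setup time `δ`, then `∑ (D i + δ) ≤ L + δ`, equivalently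
`∑ D i + (|S| − 1)·δ ≤ L`. -/
theorem setup_time_total_duration_bound
    {ι : Type*} (S : Finset ι) (hS : S.Nonempty)
    (t D : ι → ℝ) (a δ L : ℝ) (hδ : 0 ≤ δ) (hL : 0 ≤ L)
    (hD : ∀ i ∈ S, 0 < D i)
    (hfit : ∀ i ∈ S, a ≤ t i ∧ t i + D i ≤ a + L)
    (hsetup : ∀ i ∈ S, ∀ j ∈ S, i ≠ j →
      t j ≥ t i + D i + δ ∨ t i ≥ t j + D j + δ) :
    (∑ i ∈ S, (D i + δ)) ≤ L + δ ∧
    (∑ i ∈ S, D i) + ((S.card : ℝ) - 1) * δ ≤ L := by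
  classical
  have h1 := setup_aux t D δ hδ S.card S rfl hS hD a L hfit hsetup
  refine ⟨h1, ?_⟩
  have hexp : ∑ i ∈ S, (D i + δ) = (∑ i ∈ S, D i) + (S.card : ℝ) * δ := by
    rw [Finset.sum_add_distrib, Finset.sum_const, nsmul_eq_mul]
  rw [hexp] at h1
  linarith
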